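/- The maps 𝒰 ↦ Γ_𝒰 (from join-specifications to standard closure operators) and Γ ↦ 𝒰_Γ (where 𝒰_Γ = {S : ⋁S exists and ⋁S ∈ Γ(S)}) form a Galois connection between the lattice of join-specifications of P ordered by inclusion and the lattice of standard closure operators on P ordered by pointwise inclusion: Γ_𝒰 ≤ Γ if and only if 𝒰 ⊆ 𝒰_Γ. -/
import Mathlib


variable {P : Type*} [PartialOrder P]

/-- Down-closure of a set. -/
def dcl (S : Set P) : Set P := {p | ∃ s ∈ S, p ≤ s}

/-- Principal downset. -/
def pd (p : P) : Set P := {q | q ≤ p}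

/-- Standard closure operator: extensive, monotone, idempotent, with Γ({p}) = p↓. -/
def IsStdClosure (Γ : Set P → Set P) : Prop :=
  (∀ S, S ⊆ Γ S) ∧ (∀ S T : Set P, S ⊆ T → Γ S ⊆ Γ T) ∧ (∀ S, Γ (Γ S) = Γ S) ∧
    ∀ p : P, Γ {p} = pd p

def IsClosedIn (Γ : Set P → Set P) (C : Set P) : Prop := Γ C = C

/-- Join-specification: all joins of members exist, and all singletons belong. -/
def IsJoinSpec (𝒰 : Set (Set P)) : Prop :=
  (∀ S ∈ 𝒰, ∃ x : P, IsLUB S x) ∧ ∀ p : P, {p} ∈ 𝒰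

/-- 𝒰-ideal: down-closed and closed under joins of members of 𝒰. -/
def IsUIdeal (𝒰 : Set (Set P)) (I : Set P) : Prop :=
  IsLowerSet I ∧ ∀ S ∈ 𝒰, S ⊆ I → ∀ x : P, IsLUB S x → x ∈ I

/-- The smallest 𝒰-ideal containing S. -/
def GammaU (𝒰 : Set (Set P)) (S : Set P) : Set P :=
  ⋂₀ {I : Set P | IsUIdeal 𝒰 I ∧ S ⊆ I}

/-- 𝒰⁺: sets whose join exists and lies in the 𝒰-ideal closure. -/
def UPlus (𝒰 : Set (Set P)) : Set (Set P) :=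
  {S : Set P | ∃ x : P, IsLUB S x ∧ x ∈ GammaU 𝒰 S}

/-- Υ_𝒰(S) = { ⋁T : T ∈ 𝒰⁺, T ⊆ S↓ }. -/
def Upsilon (𝒰 : Set (Set P)) (S : Set P) : Set P :=
  {x : P | ∃ T ∈ UPlus 𝒰, T ⊆ dcl S ∧ IsLUB T x}

/-- The complete lattice of 𝒰-ideals (meets = intersections, joins = closure of unions)
is a frame. -/
def IdealFrame (𝒰 : Set (Set P)) : Prop :=
  ∀ D : Set P, IsUIdeal 𝒰 D → ∀ 𝒞 : Set (Set P), (∀ C ∈ 𝒞, IsUIdeal 𝒰 C) →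
    D ∩ GammaU 𝒰 (⋃₀ 𝒞) = GammaU 𝒰 (⋃ C ∈ 𝒞, D ∩ C)

/-- The complete lattice of Γ-closed sets is a frame. -/
def ClosFrame (Γ : Set P → Set P) : Prop :=
  ∀ D : Set P, IsClosedIn Γ D → ∀ 𝒞 : Set (Set P), (∀ C ∈ 𝒞, IsClosedIn Γ C) →
    D ∩ Γ (⋃₀ 𝒞) = Γ (⋃ C ∈ 𝒞, D ∩ C)

theorem stmt7 (𝒰 : Set (Set P)) (hU : IsJoinSpec 𝒰)
    (Γ : Set P → Set P) (hΓ : IsStdClosure Γ) :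
    (∀ S : Set P, GammaU 𝒰 S ⊆ Γ S) ↔
      𝒰 ⊆ {S : Set P | ∃ x : P, IsLUB S x ∧ x ∈ Γ S} := by
  obtain ⟨hext, hmono, hidem, hsing⟩ := hΓ
  constructor
  · intro h S hS
    obtain ⟨x, hx⟩ := hU.1 S hS
    refine ⟨x, hx, h S ?_⟩
    intro I hI
    exact hI.1.2 S hS hI.2 x hx
  · intro h S
    have hideal : IsUIdeal 𝒰 (Γ S) := by
      constructor
      · intro a b hba ha
        have : b ∈ Γ {a} := by rw [hsing]; exact hba
        have := hmono {a} (Γ S) (by simpa using ha) this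
        rwa [hidem] at this
      · intro T hT hTsub x hx
        obtain ⟨y, hy, hyT⟩ := h hT
        have : x = y := hx.unique hy
        subst this
        have := hmono T (Γ S) hTsub hyT
        rwa [hidem] at this
    exact fun p hp => hp (Γ S) ⟨hideal, hext S⟩
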